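/- Let G be a finite group generated by two elements s, t satisfying s·t⁻¹·s⁻¹ = t·s⁻¹·t⁻¹, with s ≠ t. Set x = t·s⁻¹, H = ⟨x⟩, J = ⟨t⟩. Then H is a normal subgroup of the subgroup generated by H and J, H ∩ J = {e}, and G = H·J; that is, G is the (internal) semidirect product of J acting on H. -/

import Mathlib

theorem stmt_5 {G : Type*} [Group G] [Finite G] (s t : G)
    (hgen : Subgroup.closure {s, t} = ⊤)
    (hrel : s * t⁻¹ * s⁻¹ = t * s⁻¹ * t⁻¹) (hst : s ≠ t)
    (x : G) (hx : x = t * s⁻¹) :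
    (Subgroup.zpowers x).Normal ∧
    Subgroup.zpowers x ⊓ Subgroup.zpowers t = ⊥ ∧
    Subgroup.zpowers x ⊔ Subgroup.zpowers t = ⊤ := by
  have h1 : s * t * s⁻¹ = t * s * t⁻¹ := by
    have h := congrArg (fun g => g⁻¹) hrel
    simpa [mul_assoc] using h
  -- the key relation: conjugation by t⁻¹ squares x
  have hkey : t⁻¹ * x * t = x * x := by
    subst hx
    have h3 : t * s = s * t * s⁻¹ * t := by rw [h1]; group
    calc t⁻¹ * (t * s⁻¹) * t = s⁻¹ * (t * s) * s⁻¹ := by group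
      _ = s⁻¹ * (s * t * s⁻¹ * t) * s⁻¹ := by rw [← h3]
      _ = t * s⁻¹ * (t * s⁻¹) := by group
  set H := Subgroup.zpowers x with hH
  -- conjugation by t⁻¹ preserves H
  have hconj : ∀ n ∈ H, t⁻¹ * n * (t⁻¹)⁻¹ ∈ H := by
    intro n hn
    obtain ⟨a, rfl⟩ := Subgroup.mem_zpowers_iff.mp hn
    rw [inv_inv, show t⁻¹ * x ^ a * t = (t⁻¹ * x * (t⁻¹)⁻¹) ^ a by rw [conj_zpow, inv_inv],
      inv_inv, hkey]
    exact Subgroup.zpow_mem H (Subgroup.mul_mem H (Subgroup.mem_zpowers x)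
      (Subgroup.mem_zpowers x)) a
  have htinv : t⁻¹ ∈ (Subgroup.normalizer (H : Set G)) := Subgroup.mem_normalizer_fintype hconj
  have ht : t ∈ (Subgroup.normalizer (H : Set G)) := by
    have := (Subgroup.normalizer (H : Set G)).inv_mem htinv
    simpa using this
  have hxn : x ∈ (Subgroup.normalizer (H : Set G)) := Subgroup.le_normalizer (Subgroup.mem_zpowers x)
  have hs : s ∈ (Subgroup.normalizer (H : Set G)) := by
    have hsinv : s⁻¹ ∈ (Subgroup.normalizer (H : Set G)) := by
      have : s⁻¹ = t⁻¹ * x := by rw [hx]; group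
      rw [this]
      exact mul_mem htinv hxn
    have := (Subgroup.normalizer (H : Set G)).inv_mem hsinv
    simpa using this
  have hnorm : H.Normal := by
    rw [← Subgroup.normalizer_eq_top_iff]
    rw [eq_top_iff, ← hgen, Subgroup.closure_le]
    rintro g (rfl | rfl)
    · exact hs
    · exact ht
  refine ⟨hnorm, ?_, ?_⟩
  · rw [eq_bot_iff]
    rintro z ⟨hzH, hzJ⟩
    obtain ⟨a, ha⟩ := Subgroup.mem_zpowers_iff.mp hzH
    obtain ⟨b, hb⟩ := Subgroup.mem_zpowers_iff.mp hzJ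
    have hcomm : t⁻¹ * z * t = z := by
      rw [← hb]
      have hc : t * t ^ b = t ^ b * t := ((Commute.refl t).zpow_right b).eq
      rw [mul_assoc, ← hc, ← mul_assoc, inv_mul_cancel, one_mul]
    have h2 : t⁻¹ * z * t = z * z := by
      rw [← ha, show t⁻¹ * x ^ a * t = (t⁻¹ * x * (t⁻¹)⁻¹) ^ a by rw [conj_zpow, inv_inv],
        inv_inv, hkey, (Commute.refl x).mul_zpow]
    have : z * z = z := by rw [← h2, hcomm]
    have hz1 : z = 1 := mul_right_cancel (b := z) (by rw [this, one_mul])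
    simp [hz1]
  · apply le_antisymm le_top
    rw [← hgen, Subgroup.closure_le]
    rintro g (rfl | rfl)
    · have : g = x⁻¹ * t := by rw [hx]; group
      rw [this]
      exact mul_mem (Subgroup.mem_sup_left (Subgroup.inv_mem _ (Subgroup.mem_zpowers x)))
        (Subgroup.mem_sup_right (Subgroup.mem_zpowers t))
    · exact Subgroup.mem_sup_right (Subgroup.mem_zpowers _)
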